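/- Let β ∈ ℝ, g > 0, λ ∈ ℝ, let R : ℝ → ℝ be any function, and let φ : ℝ → ℝ be differentiable with φ'(z) = λ h(φ(z)) + λ g R(z) w(φ(z)) for all z ∈ ℝ, φ(z + 2π) = φ(z) + 2π for all z ∈ ℝ, and φ(0) = π. Then π < φ(z) < 3π for all z ∈ (0, 2π), and −π < φ(z) < π for all z ∈ (−2π, 0). -/

import Mathlib

open Real Set Filter Topology

/-- Barrier lemma: if `f a = c` and the derivative of `f` is positive at every point
of the level set `{f = c}`, then `f z > c` for all `z > a`. -/
lemma forward_barrier (f : ℝ → ℝ) (hf : Differentiable ℝ f) {c a : ℝ} (hfa : f a = c)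
    (hpos : ∀ z, f z = c → 0 < deriv f z) : ∀ z, a < z → c < f z := by
  have key : ∀ z, a < z → ¬ f z < c := by
    intro z haz hfz
    set K : Set ℝ := Icc a z ∩ f ⁻¹' {c} with hKdef
    have hKc : IsCompact K :=
      isCompact_Icc.of_isClosed_subset
        (isClosed_Icc.inter (isClosed_singleton.preimage hf.continuous))
        inter_subset_left
    have hKne : K.Nonempty := ⟨a, ⟨le_refl a, haz.le⟩, hfa⟩
    obtain ⟨t, htK, htub⟩ := hKc.exists_isGreatest hKne
    obtain ⟨⟨hat, htz⟩, hftpre⟩ := htK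
    have hft : f t = c := hftpre
    have htz' : t < z := lt_of_le_of_ne htz (by rintro rfl; exact hfz.ne hft)
    -- derivative positive at t gives a point s ∈ (t, z) with f s > c
    have hd : HasDerivAt f (deriv f t) t := (hf t).hasDerivAt
    have hslope := hasDerivAt_iff_tendsto_slope.mp hd
    have h1 : ∀ᶠ s in 𝓝[≠] t, 0 < slope f t s :=
      hslope.eventually (eventually_gt_nhds (hpos t hft))
    have h1' : ∀ᶠ s in 𝓝[>] t, 0 < slope f t s :=
      h1.filter_mono (nhdsWithin_mono t (fun s hs => hs.ne'))
    have h2 : Ioo t z ∈ 𝓝[>] t := Ioo_mem_nhdsGT_of_mem ⟨le_refl t, htz'⟩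
    obtain ⟨s, hs1, hs2⟩ := (h1'.and (eventually_of_mem h2 (fun x hx => hx))).exists
    have hst : (0:ℝ) < s - t := sub_pos.mpr hs2.1
    have hfs : c < f s := by
      rw [slope_def_field, div_pos_iff] at hs1
      rcases hs1 with ⟨h, _⟩ | ⟨_, h⟩
      · linarith [hft ▸ h]
      · linarith
    -- IVT on [s, z]
    have hivt := intermediate_value_Icc' hs2.2.le (hf.continuous.continuousOn (s := Icc s z))
    obtain ⟨u, hu, hfu⟩ := hivt ⟨hfz.le, hfs.le⟩
    have huK : u ∈ K := ⟨⟨le_trans hat (le_trans hs2.1.le hu.1), hu.2⟩, hfu⟩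
    have := htub huK
    linarith [hs2.1, hu.1]
  intro z haz
  rcases lt_trichotomy (f z) c with h | h | h
  · exact absurd h (key z haz)
  · -- f z = c : derivative positive at z gives s < z near z with f s < c, contradiction
    exfalso
    have hd : HasDerivAt f (deriv f z) z := (hf z).hasDerivAt
    have hslope := hasDerivAt_iff_tendsto_slope.mp hd
    have h1 : ∀ᶠ s in 𝓝[≠] z, 0 < slope f z s :=
      hslope.eventually (eventually_gt_nhds (hpos z h))
    have h1' : ∀ᶠ s in 𝓝[<] z, 0 < slope f z s :=
      h1.filter_mono (nhdsWithin_mono z (fun s hs => hs.ne))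
    have h2 : Ioo a z ∈ 𝓝[<] z := Ioo_mem_nhdsLT_of_mem ⟨haz, le_refl z⟩
    obtain ⟨s, hs1, hs2⟩ := (h1'.and (eventually_of_mem h2 (fun x hx => hx))).exists
    have hfs : f s < c := by
      rw [slope_def_field, div_pos_iff] at hs1
      rcases hs1 with ⟨_, h'⟩ | ⟨h', _⟩
      · linarith [hs2.2]
      · linarith [h ▸ h']
    exact key s hs2.1 hfs
  · exact h

/-- Reversed barrier lemma: if `f a = c` and the derivative of `f` is positive at every
point of the level set `{f = c}`, then `f z < c` for all `z < a`. -/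
lemma backward_barrier (f : ℝ → ℝ) (hf : Differentiable ℝ f) {c a : ℝ} (hfa : f a = c)
    (hpos : ∀ z, f z = c → 0 < deriv f z) : ∀ z, z < a → f z < c := by
  set g : ℝ → ℝ := fun x => -f (2 * a - x) with hg
  have hgd : Differentiable ℝ g :=
    (hf.comp ((differentiable_const _).sub differentiable_id)).neg
  have hderg : ∀ x, deriv g x = deriv f (2 * a - x) := by
    intro x
    have h1 : HasDerivAt (fun x : ℝ => 2 * a - x) (0 - 1) x :=
      (hasDerivAt_const x (2 * a)).sub (hasDerivAt_id x)
    have h2 : HasDerivAt (fun y => -f (2 * a - y)) (-(deriv f (2 * a - x) * (0 - 1))) x :=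
      ((hf (2 * a - x)).hasDerivAt.comp x h1).neg
    have h3 : HasDerivAt g (deriv f (2 * a - x)) x := by
      convert h2 using 1; ring
    exact h3.deriv
  have hga : g a = -c := by
    simp only [hg]
    rw [show 2 * a - a = a by ring, hfa]
  have hgpos : ∀ x, g x = -c → 0 < deriv g x := by
    intro x hx
    rw [hderg]
    exact hpos _ (by simpa [hg, neg_inj] using hx)
  intro z hz
  have := forward_barrier g hgd hga hgpos (2 * a - z) (by linarith)
  have h2 : g (2 * a - z) = -f z := by
    simp only [hg]
    rw [show 2 * a - (2 * a - z) = z by ring]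
  rw [h2] at this
  linarith

/-- `h(θ) = 1 - cos θ + β(1 + cos θ)`. -/
noncomputable def hTheta (β θ : ℝ) : ℝ := 1 - Real.cos θ + β * (1 + Real.cos θ)

/-- `w(θ) = 1 + cos θ`. -/
noncomputable def wTheta (θ : ℝ) : ℝ := 1 + Real.cos θ

/-- Lemma 3.1 (lemma `one`): for any solution of the travelling-wave equation with winding
number `m = 1` and `φ(0) = π`, one has `π < φ(z) < 3π` on `(0, 2π)` and
`-π < φ(z) < π` on `(-2π, 0)`. -/
theorem rotating_waves_stmt_3 (β g lam : ℝ) (hg : 0 < g)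
    (R : ℝ → ℝ) (φ : ℝ → ℝ) (hφ : Differentiable ℝ φ)
    (hode : ∀ z : ℝ, deriv φ z
      = lam * hTheta β (φ z) + lam * g * R z * wTheta (φ z))
    (hper : ∀ z : ℝ, φ (z + 2 * Real.pi) = φ z + 2 * Real.pi)
    (h0 : φ 0 = Real.pi) :
    (∀ z ∈ Set.Ioo (0 : ℝ) (2 * Real.pi), Real.pi < φ z ∧ φ z < 3 * Real.pi) ∧
    (∀ z ∈ Set.Ioo (-(2 * Real.pi)) (0 : ℝ), -Real.pi < φ z ∧ φ z < Real.pi) := by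
  have pi_pos := Real.pi_pos
  -- values of φ at ±2π
  have h2π : φ (2 * Real.pi) = 3 * Real.pi := by
    have := hper 0; rw [zero_add, h0] at this; linarith
  have hm2π : φ (-(2 * Real.pi)) = -Real.pi := by
    have := hper (-(2 * Real.pi))
    rw [show -(2 * Real.pi) + 2 * Real.pi = 0 by ring, h0] at this
    linarith
  -- at any level c with cos c = -1, the derivative equals 2λ
  have hlevel : ∀ c : ℝ, Real.cos c = -1 → ∀ z, φ z = c → deriv φ z = 2 * lam := by
    intro c hc z hz
    rw [hode z, hz, hTheta, wTheta, hc]; ring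
  have hcos3π : Real.cos (3 * Real.pi) = -1 := by
    rw [show (3:ℝ) * Real.pi = Real.pi + 2 * Real.pi by ring, Real.cos_add_two_pi,
      Real.cos_pi]
  have hcosmπ : Real.cos (-Real.pi) = -1 := by rw [Real.cos_neg, Real.cos_pi]
  -- λ must be positive
  have hlam : 0 < lam := by
    rcases lt_trichotomy lam 0 with h | h | h
    · exfalso
      have hneg : ∀ z, (fun x => -φ x) z = -Real.pi → 0 < deriv (fun x => -φ x) z := by
        intro z hz
        have hz' : φ z = Real.pi := by simpa [neg_inj] using hz
        rw [deriv.fun_neg, hlevel Real.pi Real.cos_pi z hz']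
        linarith
      have := forward_barrier (fun x => -φ x) hφ.neg (c := -Real.pi) (a := 0)
        (show (fun x => -φ x) 0 = -Real.pi by simp [h0]) hneg (2 * Real.pi) (by positivity)
      have h' : -Real.pi < -φ (2 * Real.pi) := this
      rw [h2π] at h'
      linarith
    · exfalso
      have hc : ∀ z, deriv φ z = 0 := by intro z; rw [hode z, h]; ring
      have := is_const_of_deriv_eq_zero hφ hc (2 * Real.pi) 0
      rw [h2π, h0] at this
      linarith
    · exact h
  -- the four barrier bounds
  have hposπ : ∀ z, φ z = Real.pi → 0 < deriv φ z := fun z hz => by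
    rw [hlevel Real.pi Real.cos_pi z hz]; linarith
  have hpos3π : ∀ z, φ z = 3 * Real.pi → 0 < deriv φ z := fun z hz => by
    rw [hlevel (3 * Real.pi) hcos3π z hz]; linarith
  have hposmπ : ∀ z, φ z = -Real.pi → 0 < deriv φ z := fun z hz => by
    rw [hlevel (-Real.pi) hcosmπ z hz]; linarith
  have hB1 := forward_barrier φ hφ h0 hposπ
  have hB2 := backward_barrier φ hφ h0 hposπ
  have hB3 := backward_barrier φ hφ h2π hpos3π
  have hB4 := forward_barrier φ hφ hm2π hposmπ
  constructor
  · intro z hz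
    exact ⟨hB1 z hz.1, hB3 z hz.2⟩
  · intro z hz
    exact ⟨hB4 z hz.1, hB2 z hz.2⟩
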